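/- Let d ≥ 3 be an integer, α(d) := (2 − d + √(d² + 12d + 4))/(2d), and let α be a real number with 1 + α(d) < α < 1 + 4/(d−2). Set q̃ := 2(α²−1)/(4 − (α−1)(d−2)). Then for every real C ≥ 0 and every measurable function w : [0, 1] → [0, ∞] satisfying w(t) ≤ C for all t ∈ [0, 1], one has ∫₀^∞ (1+s)^{−d(α−1)q̃/(2(α+1))} · w(s/(1+s))^{q̃} ds < ∞. -/

import Mathlib

set_option maxHeartbeats 1000000 in
/-- For `d ≥ 3`, Strauss exponent `α(d)`, `1 + α(d) < α < 1 + 4/(d−2)` and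
`q̃ = 2(α²−1)/(4 − (α−1)(d−2))`: for every `C ≥ 0` and every measurable
`w : [0,1] → [0,∞]` with `w ≤ C` on `[0,1]`, one has
`∫₀^∞ (1+s)^{−d(α−1)q̃/(2(α+1))} w(s/(1+s))^{q̃} ds < ∞`. -/
theorem stmt_14 (d : ℕ) (hd : 3 ≤ d) (a α q : ℝ)
    (ha : a = (2 - (d : ℝ) + Real.sqrt ((d : ℝ) ^ 2 + 12 * (d : ℝ) + 4)) / (2 * (d : ℝ)))
    (hα1 : 1 + a < α) (hα2 : α < 1 + 4 / ((d : ℝ) - 2))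
    (hq : q = 2 * (α ^ 2 - 1) / (4 - (α - 1) * ((d : ℝ) - 2)))
    (C : ℝ) (hC : 0 ≤ C) (w : ℝ → ENNReal) (hw : Measurable w)
    (hwb : ∀ t ∈ Set.Icc (0 : ℝ) 1, w t ≤ ENNReal.ofReal C) :
    ∫⁻ s in Set.Ioi (0 : ℝ),
        ENNReal.ofReal ((1 + s) ^ (-((d : ℝ) * (α - 1) * q / (2 * (α + 1)))))
          * (w (s / (1 + s))) ^ q < ⊤ := by
  set p : ℝ := (d : ℝ) * (α - 1) * q / (2 * (α + 1)) with hp_def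
  have hd3 : (3 : ℝ) ≤ (d : ℝ) := by exact_mod_cast hd
  have hdpos : (0 : ℝ) < d := by linarith
  have hd2 : (0 : ℝ) < (d : ℝ) - 2 := by linarith
  -- the Strauss exponent satisfies d a² + (d-2) a = 4 and a > 0
  set S : ℝ := Real.sqrt ((d : ℝ) ^ 2 + 12 * (d : ℝ) + 4) with hS_def
  have hS2 : S ^ 2 = (d : ℝ) ^ 2 + 12 * (d : ℝ) + 4 := by
    rw [hS_def, Real.sq_sqrt]; nlinarith
  have hSnn : 0 ≤ S := Real.sqrt_nonneg _
  have hSgt : (d : ℝ) - 2 < S := by nlinarith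
  have ha0 : 0 < a := by
    rw [ha]; apply div_pos; linarith; linarith
  have haeq : (d : ℝ) * a ^ 2 + ((d : ℝ) - 2) * a = 4 := by
    have h2d : (2 : ℝ) * d ≠ 0 := by positivity
    have hSa : S = 2 * d * a - 2 + d := by
      rw [ha]; field_simp; ring
    nlinarith [hS2, hSa]
  have hα1' : (1 : ℝ) < α := by linarith
  -- positivity of the denominator D := 4 - (α-1)(d-2)
  have hD : 0 < 4 - (α - 1) * ((d : ℝ) - 2) := by
    have : (α - 1) * ((d : ℝ) - 2) < 4 := by
      have h4 : α - 1 < 4 / ((d : ℝ) - 2) := by linarith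
      calc (α - 1) * ((d : ℝ) - 2) < (4 / ((d : ℝ) - 2)) * ((d : ℝ) - 2) := by
            apply mul_lt_mul_of_pos_right h4 hd2
        _ = 4 := by field_simp
    linarith
  have hq0 : 0 < q := by
    rw [hq]; apply div_pos; nlinarith; exact hD
  -- key quadratic inequality: d(α-1)² > 4 - (α-1)(d-2)
  have hkey : 4 - (α - 1) * ((d : ℝ) - 2) < (d : ℝ) * (α - 1) ^ 2 := by
    nlinarith [haeq, mul_pos hdpos (mul_pos (by linarith : (0:ℝ) < α - 1 - a) ha0)]
  have hqD : q * (4 - (α - 1) * ((d : ℝ) - 2)) = 2 * (α ^ 2 - 1) := by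
    rw [hq]; field_simp
  have hp1 : 1 < p := by
    have h2 : (d : ℝ) * (α - 1) * (q * (4 - (α - 1) * ((d : ℝ) - 2)))
        = 2 * (α + 1) * ((d : ℝ) * (α - 1) ^ 2) := by rw [hqD]; ring
    have h3 : 2 * (α + 1) * (4 - (α - 1) * ((d : ℝ) - 2))
        < 2 * (α + 1) * ((d : ℝ) * (α - 1) ^ 2) :=
      mul_lt_mul_of_pos_left hkey (by linarith)
    rw [← h2] at h3
    have h4 : (d : ℝ) * (α - 1) * (q * (4 - (α - 1) * ((d : ℝ) - 2)))
        = ((d : ℝ) * (α - 1) * q) * (4 - (α - 1) * ((d : ℝ) - 2)) := by ring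
    rw [h4] at h3
    have hlt : 2 * (α + 1) < (d : ℝ) * (α - 1) * q := (mul_lt_mul_iff_left₀ hD).1 h3
    rw [hp_def, lt_div_iff₀ (by linarith : (0:ℝ) < 2 * (α + 1)), one_mul]
    exact hlt
  have hp0 : (0 : ℝ) < p := by linarith
  -- bound the integrand
  have hboundfun : Measurable fun s : ℝ =>
      ENNReal.ofReal ((1 + s) ^ (-p)) * (ENNReal.ofReal C) ^ q := by
    fun_prop
  have hmono : ∫⁻ s in Set.Ioi (0 : ℝ),
      ENNReal.ofReal ((1 + s) ^ (-p)) * (w (s / (1 + s))) ^ q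
      ≤ ∫⁻ s in Set.Ioi (0 : ℝ),
      ENNReal.ofReal ((1 + s) ^ (-p)) * (ENNReal.ofReal C) ^ q := by
    apply MeasureTheory.setLIntegral_mono hboundfun
    intro s hs
    have hs0 : 0 < s := hs
    have ht : s / (1 + s) ∈ Set.Icc (0 : ℝ) 1 := by
      constructor
      · positivity
      · rw [div_le_one (by linarith)]; linarith
    exact mul_le_mul_right (ENNReal.rpow_le_rpow (hwb _ ht) hq0.le) _
  refine lt_of_le_of_lt hmono ?_
  rw [MeasureTheory.lintegral_mul_const _
    (by fun_prop : Measurable fun s : ℝ => ENNReal.ofReal ((1 + s) ^ (-p)))]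
  apply ENNReal.mul_lt_top
  · -- ∫⁻ s in Ioi 0, ofReal ((1+s)^(-p)) < ⊤
    rw [← Set.Ioc_union_Ioi_eq_Ioi (zero_le_one' ℝ),
      MeasureTheory.lintegral_union measurableSet_Ioi (Set.Ioc_disjoint_Ioi le_rfl)]
    apply ENNReal.add_lt_top.2
    constructor
    · refine lt_of_le_of_lt (MeasureTheory.setLIntegral_mono (g := fun _ => (1:ENNReal)) measurable_const ?_) ?_
      · intro s hs
        refine ENNReal.ofReal_le_one.2 ?_
        exact Real.rpow_le_one_of_one_le_of_nonpos (by linarith [hs.1]) (by linarith)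
      · rw [MeasureTheory.setLIntegral_const]
        simp
    · have hint : MeasureTheory.IntegrableOn (fun s : ℝ => s ^ (-p)) (Set.Ioi 1) :=
        integrableOn_Ioi_rpow_of_lt (by linarith) one_pos
      refine lt_of_le_of_lt (MeasureTheory.setLIntegral_mono
        (by fun_prop : Measurable fun s : ℝ => ENNReal.ofReal (s ^ (-p))) ?_)
        hint.setLIntegral_lt_top
      intro s hs
      have hs1 : (1 : ℝ) < s := hs
      exact ENNReal.ofReal_le_ofReal
        (Real.rpow_le_rpow_of_nonpos (by linarith) (by linarith) (by linarith))
  · exact ENNReal.rpow_lt_top_of_nonneg hq0.le ENNReal.ofReal_ne_top
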